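/- arXiv:2103.05609 — 3 statements merged into one kernel-verified Lean document; each statement's English description precedes it below -/
import Mathlib

section
/- For every real x with −π < x < π, the series Σ_{n=1}^{∞} 4·sin((2n−1)x) / ((2n−1)·π) converges and its sum equals sign(x), i.e., it equals 1 if x > 0, equals 0 if x = 0, and equals −1 if x < 0. -/
open Finset Filter

/-- Partial sums of sines of odd multiples. -/
lemma sq7_sin_odd_sum (x : ℝ) (N : ℕ) :
    (∑ i ∈ range N, Real.sin ((2 * (i:ℝ) + 1) * x)) * Real.sin x
      = Real.sin ((N:ℝ) * x) ^ 2 := by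
  induction N with
  | zero => simp
  | succ n ih =>
    rw [Finset.sum_range_succ, add_mul, ih]
    push_cast
    have h := Real.cos_sub_cos (2 * (n:ℝ) * x) (2 * ((n:ℝ) + 1) * x)
    have h1 : (2 * (n:ℝ) * x + 2 * ((n:ℝ) + 1) * x) / 2 = (2 * (n:ℝ) + 1) * x := by ring
    have h2 : (2 * (n:ℝ) * x - 2 * ((n:ℝ) + 1) * x) / 2 = -x := by ring
    rw [h1, h2, Real.sin_neg] at h
    have s1 := Real.sin_sq_eq_half_sub ((n:ℝ) * x)
    have s2 := Real.sin_sq_eq_half_sub (((n:ℝ) + 1) * x)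
    have e1 : 2 * ((n:ℝ) * x) = 2 * (n:ℝ) * x := by ring
    have e2 : 2 * (((n:ℝ) + 1) * x) = 2 * ((n:ℝ) + 1) * x := by ring
    rw [e1] at s1
    rw [e2] at s2
    linarith

/-- Key lemma: for `0 < x < π`, `∑ sin((2n+1)x)/(2n+1) = π/4`. -/
lemma sq7_aux_pos {x : ℝ} (h0 : 0 < x) (hπ : x < Real.pi) :
    Tendsto (fun N : ℕ => ∑ n ∈ range N, Real.sin ((2 * (n:ℝ) + 1) * x) / (2 * (n:ℝ) + 1))
      atTop (nhds (Real.pi / 4)) := by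
  have hsx : 0 < Real.sin x := Real.sin_pos_of_pos_of_lt_pi h0 hπ
  have hhalf : 0 < Real.cos (x / 2) := by
    apply Real.cos_pos_of_mem_Ioo
    constructor <;> [linarith [Real.pi_pos]; linarith]
  have hhalfs : 0 < Real.sin (x / 2) := by
    apply Real.sin_pos_of_pos_of_lt_pi <;> [linarith; linarith [Real.pi_pos]]
  -- Dirichlet test: convergence to some l
  have hanti : Antitone (fun n : ℕ => (2 * (n:ℝ) + 1)⁻¹) := by
    intro a b hab
    have : (a:ℝ) ≤ b := Nat.cast_le.mpr hab
    have h1 : (0:ℝ) < 2 * a + 1 := by positivity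
    apply inv_anti₀ h1
    linarith
  have hto0 : Tendsto (fun n : ℕ => (2 * (n:ℝ) + 1)⁻¹) atTop (nhds 0) := by
    apply Tendsto.inv_tendsto_atTop
    apply Filter.tendsto_atTop_add_const_right
    exact (tendsto_natCast_atTop_atTop (R := ℝ)).const_mul_atTop two_pos
  have hb : ∀ n : ℕ, ‖∑ i ∈ range n, Real.sin ((2 * (i:ℝ) + 1) * x)‖ ≤ (Real.sin x)⁻¹ := by
    intro n
    have h := sq7_sin_odd_sum x n
    have hs : ∑ i ∈ range n, Real.sin ((2 * (i:ℝ) + 1) * x)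
        = Real.sin ((n:ℝ) * x) ^ 2 / Real.sin x := by
      rw [eq_div_iff hsx.ne']; exact h
    rw [hs, Real.norm_eq_abs, abs_div, abs_of_nonneg (sq_nonneg _), abs_of_pos hsx]
    rw [div_le_iff₀ hsx, inv_mul_cancel₀ hsx.ne']
    calc Real.sin ((n:ℝ) * x) ^ 2 ≤ 1 ^ 2 := by
          apply sq_le_sq'
          · linarith [Real.neg_one_le_sin ((n:ℝ) * x)]
          · exact Real.sin_le_one _
      _ = 1 := one_pow 2
  have hcauchy := hanti.cauchySeq_series_mul_of_tendsto_zero_of_bounded hto0 hb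
  obtain ⟨l, hl⟩ := cauchySeq_tendsto_of_complete hcauchy
  have ha : Tendsto (fun N : ℕ => ∑ n ∈ range N,
      Real.sin ((2 * (n:ℝ) + 1) * x) / (2 * (n:ℝ) + 1)) atTop (nhds l) := by
    refine hl.congr fun N => Finset.sum_congr rfl fun n _ => ?_
    rw [smul_eq_mul, inv_mul_eq_div]
  -- Abel's limit theorem
  set a : ℕ → ℝ := fun n => Real.sin ((2 * (n:ℝ) + 1) * x) / (2 * (n:ℝ) + 1) with ha_def
  have habel := Real.tendsto_tsum_powerSeries_nhdsWithin_lt ha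
  have hsq : Tendsto (fun t : ℝ => t ^ 2) (nhdsWithin 1 (Set.Iio 1)) (nhdsWithin 1 (Set.Iio 1)) := by
    rw [tendsto_nhdsWithin_iff]
    constructor
    · have : Tendsto (fun t : ℝ => t ^ 2) (nhds 1) (nhds 1) := by
        simpa using (continuous_pow 2).tendsto (1:ℝ)
      exact this.mono_left nhdsWithin_le_nhds
    · filter_upwards [Ioo_mem_nhdsLT_of_mem (by norm_num : (1:ℝ) ∈ Set.Ioc 0 1)] with t ht
      have : t ^ 2 < 1 := by nlinarith [ht.1, ht.2]
      exact this
  have hF := habel.comp hsq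
  have hmul : Tendsto (fun t : ℝ => t * ∑' n, a n * (t ^ 2) ^ n)
      (nhdsWithin 1 (Set.Iio 1)) (nhds (1 * l)) :=
    ((continuous_id.tendsto (1:ℝ)).mono_left nhdsWithin_le_nhds).mul hF
  set e : ℂ := Complex.exp (x * Complex.I) with he_def
  -- closed form on (0,1)
  have heq : ∀ᶠ t in nhdsWithin (1:ℝ) (Set.Iio 1), t * ∑' n, a n * (t ^ 2) ^ n
      = ((Complex.log (1 + (t:ℂ) * e) - Complex.log (1 - (t:ℂ) * e)).im) / 2 := by
    filter_upwards [Ioo_mem_nhdsLT_of_mem (by norm_num : (1:ℝ) ∈ Set.Ioc 0 1)] with t ht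
    have hw : ‖(t:ℂ) * e‖ < 1 := by
      rw [norm_mul, he_def]
      have hx' : ((x:ℝ) : ℂ) * Complex.I = (x:ℂ) * Complex.I := rfl
      rw [← hx', Complex.norm_exp_ofReal_mul_I, mul_one,
        Complex.norm_real, Real.norm_eq_abs, abs_of_pos ht.1]
      exact ht.2
    have h1 : HasSum (fun n : ℕ => ((t:ℂ) * e) ^ n / n) (-Complex.log (1 - (t:ℂ) * e)) :=
      Complex.hasSum_taylorSeries_neg_log hw
    have h2 : HasSum (fun n : ℕ => (-((t:ℂ) * e)) ^ n / n) (-Complex.log (1 + (t:ℂ) * e)) := by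
      have := Complex.hasSum_taylorSeries_neg_log (z := -((t:ℂ) * e)) (by rwa [norm_neg])
      simpa [sub_neg_eq_add] using this
    have h3 := h1.sub h2
    have hval : -Complex.log (1 - (t:ℂ) * e) - -Complex.log (1 + (t:ℂ) * e)
        = Complex.log (1 + (t:ℂ) * e) - Complex.log (1 - (t:ℂ) * e) := by ring
    rw [hval] at h3
    have hinj : Function.Injective (fun k : ℕ => 2 * k + 1) := by
      intro a b hab
      dsimp only at hab
      omega
    have h4 : HasSum ((fun n : ℕ => ((t:ℂ) * e) ^ n / n - (-((t:ℂ) * e)) ^ n / n)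
        ∘ (fun k : ℕ => 2 * k + 1))
        (Complex.log (1 + (t:ℂ) * e) - Complex.log (1 - (t:ℂ) * e)) := by
      refine (hinj.hasSum_iff ?_).mpr h3
      intro n hn
      have hev : Even n := by
        rcases Nat.even_or_odd n with hev | hod
        · exact hev
        · obtain ⟨k, hk⟩ := hod
          exact absurd ⟨k, hk.symm⟩ hn
      rw [hev.neg_pow, sub_self]
    have h5 : HasSum (fun k : ℕ => 2 * ((t:ℂ) * e) ^ (2 * k + 1) / ((2 * k + 1 : ℕ) : ℂ))
        (Complex.log (1 + (t:ℂ) * e) - Complex.log (1 - (t:ℂ) * e)) := by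
      refine HasSum.congr_fun h4 fun k => ?_
      simp only [Function.comp_apply]
      rw [Odd.neg_pow (⟨k, rfl⟩ : Odd (2 * k + 1))]
      ring
    have h6 := h5.mapL Complex.imCLM
    have h7 := h6.div_const 2
    have hterm : ∀ k : ℕ, Complex.imCLM (2 * ((t:ℂ) * e) ^ (2 * k + 1) / ((2 * k + 1 : ℕ) : ℂ)) / 2
        = t * (a k * (t ^ 2) ^ k) := by
      intro k
      have hpow : ((t:ℂ) * e) ^ (2 * k + 1)
          = ((t ^ (2 * k + 1) : ℝ) : ℂ) * Complex.exp ((((2 * (k:ℝ) + 1) * x : ℝ)) * Complex.I) := by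
        rw [mul_pow, he_def, ← Complex.exp_nat_mul]
        push_cast
        ring_nf
      have hne : ((2 * k + 1 : ℕ) : ℂ) ≠ 0 := Nat.cast_ne_zero.mpr (by omega)
      have hdiv : (2 * ((t:ℂ) * e) ^ (2 * k + 1) / ((2 * k + 1 : ℕ) : ℂ))
          = ((2 * t ^ (2 * k + 1) / (2 * (k:ℝ) + 1) : ℝ) : ℂ)
            * Complex.exp ((((2 * (k:ℝ) + 1) * x : ℝ)) * Complex.I) := by
        rw [hpow]
        push_cast
        push_cast at hne
        field_simp
      rw [hdiv, Complex.imCLM_apply, Complex.im_ofReal_mul, Complex.exp_ofReal_mul_I_im]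
      simp only [ha_def]
      have hp2 : (t ^ 2) ^ k = t ^ (2 * k) := by rw [← pow_mul]
      rw [hp2]
      have hne2 : (2 * (k:ℝ) + 1) ≠ 0 := by positivity
      field_simp
      ring
    have h8 : HasSum (fun k : ℕ => t * (a k * (t ^ 2) ^ k))
        ((Complex.log (1 + (t:ℂ) * e) - Complex.log (1 - (t:ℂ) * e)).im / 2) := by
      refine HasSum.congr_fun h7 fun k => (hterm k).symm
    rw [← tsum_mul_left, h8.tsum_eq]
  -- continuity of the closed form at t = 1
  have hre : e.re = Real.cos x := by rw [he_def]; exact Complex.exp_ofReal_mul_I_re x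
  have him : e.im = Real.sin x := by rw [he_def]; exact Complex.exp_ofReal_mul_I_im x
  have hcos1 : -1 < Real.cos x := by
    have hc2 := Real.cos_sq (x / 2)
    rw [show 2 * (x / 2) = x by ring] at hc2
    nlinarith [hhalf]
  have hmem1 : (1 + e) ∈ Complex.slitPlane := by
    rw [Complex.mem_slitPlane_iff]
    left
    simp only [Complex.add_re, Complex.one_re, hre]
    linarith
  have hmem2 : (1 - e) ∈ Complex.slitPlane := by
    rw [Complex.mem_slitPlane_iff]
    right
    simp only [Complex.sub_im, Complex.one_im, him]
    intro hcon
    have : Real.sin x = 0 := by linarith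
    exact hsx.ne' this
  have hf1 : Tendsto (fun t : ℝ => 1 + (t:ℂ) * e) (nhds 1) (nhds (1 + e)) := by
    have hcf : Continuous fun t : ℝ => 1 + (t:ℂ) * e := by fun_prop
    simpa using hcf.tendsto 1
  have hf2 : Tendsto (fun t : ℝ => 1 - (t:ℂ) * e) (nhds 1) (nhds (1 - e)) := by
    have hcf : Continuous fun t : ℝ => 1 - (t:ℂ) * e := by fun_prop
    simpa using hcf.tendsto 1
  have hc1 : Tendsto (fun t : ℝ => Complex.log (1 + (t:ℂ) * e)) (nhds 1)
      (nhds (Complex.log (1 + e))) := hf1.clog hmem1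
  have hc2' : Tendsto (fun t : ℝ => Complex.log (1 - (t:ℂ) * e)) (nhds 1)
      (nhds (Complex.log (1 - e))) := hf2.clog hmem2
  have hcont : Tendsto (fun t : ℝ => ((Complex.log (1 + (t:ℂ) * e)
      - Complex.log (1 - (t:ℂ) * e)).im) / 2) (nhdsWithin 1 (Set.Iio 1))
      (nhds (((Complex.log (1 + e) - Complex.log (1 - e)).im) / 2)) := by
    have hC : Tendsto (fun t : ℝ => ((Complex.log (1 + (t:ℂ) * e)
        - Complex.log (1 - (t:ℂ) * e)).im) / 2) (nhds 1)
        (nhds (((Complex.log (1 + e) - Complex.log (1 - e)).im) / 2)) := by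
      exact ((Complex.continuous_im.tendsto _).comp (hc1.sub hc2')).div_const 2
    exact hC.mono_left (nhdsWithin_le_nhds (s := Set.Iio (1:ℝ)))
  -- identify the limit
  have hlim : 1 * l = ((Complex.log (1 + e) - Complex.log (1 - e)).im) / 2 :=
    tendsto_nhds_unique (hmul.congr' heq) hcont
  -- compute the arguments
  have hcsq := Real.cos_sq (x / 2)
  rw [show 2 * (x / 2) = x by ring] at hcsq
  have hsin2 := Real.sin_two_mul (x / 2)
  rw [show 2 * (x / 2) = x by ring] at hsin2
  have hexp : e = ((Real.cos x : ℝ) : ℂ) + ((Real.sin x : ℝ) : ℂ) * Complex.I := by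
    rw [he_def, Complex.exp_mul_I, Complex.ofReal_cos, Complex.ofReal_sin]
  have harg1 : (Complex.log (1 + e)).im = x / 2 := by
    rw [Complex.log_im]
    have hid : 1 + e = ((2 * Real.cos (x / 2) : ℝ) : ℂ)
        * (Complex.cos ((x / 2 : ℝ) : ℂ) + Complex.sin ((x / 2 : ℝ) : ℂ) * Complex.I) := by
      rw [hexp, ← Complex.ofReal_cos, ← Complex.ofReal_sin]
      simp only [Complex.ext_iff, Complex.add_re, Complex.add_im, Complex.one_re, Complex.one_im,
        Complex.mul_re, Complex.mul_im, Complex.ofReal_re, Complex.ofReal_im,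
        Complex.I_re, Complex.I_im]
      constructor
      · linear_combination (-2 : ℝ) * hcsq
      · linear_combination hsin2
    rw [hid]
    exact Complex.arg_mul_cos_add_sin_mul_I (by linarith [hhalf])
      ⟨by linarith [Real.pi_pos], by linarith [Real.pi_pos]⟩
  have harg2 : (Complex.log (1 - e)).im = x / 2 - Real.pi / 2 := by
    rw [Complex.log_im]
    have hcs : Real.cos (x / 2 - Real.pi / 2) = Real.sin (x / 2) := by
      rw [Real.cos_sub]
      simp
    have hss : Real.sin (x / 2 - Real.pi / 2) = -Real.cos (x / 2) := by
      rw [Real.sin_sub]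
      simp
    have hid : 1 - e = ((2 * Real.sin (x / 2) : ℝ) : ℂ)
        * (Complex.cos (((x / 2 - Real.pi / 2 : ℝ)) : ℂ)
          + Complex.sin (((x / 2 - Real.pi / 2 : ℝ)) : ℂ) * Complex.I) := by
      rw [hexp, ← Complex.ofReal_cos, ← Complex.ofReal_sin, hcs, hss]
      simp only [Complex.ext_iff, Complex.sub_re, Complex.sub_im, Complex.add_re, Complex.add_im,
        Complex.one_re, Complex.one_im, Complex.mul_re, Complex.mul_im, Complex.ofReal_re,
        Complex.ofReal_im, Complex.I_re, Complex.I_im, Complex.neg_re, Complex.neg_im,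
        Complex.ofReal_neg]
      constructor
      · linear_combination (-2 : ℝ) * Real.sin_sq_add_cos_sq (x / 2) + 2 * hcsq
      · linear_combination -hsin2
    rw [hid]
    exact Complex.arg_mul_cos_add_sin_mul_I (by linarith [hhalfs])
      ⟨by linarith [Real.pi_pos], by linarith [Real.pi_pos]⟩
  have hlval : l = Real.pi / 4 := by
    rw [one_mul] at hlim
    rw [hlim, Complex.sub_im, harg1, harg2]
    ring
  rw [← hlval]
  exact ha

theorem stmt_7 (x : ℝ) (hx₁ : -Real.pi < x) (hx₂ : x < Real.pi) :
    Filter.Tendsto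
      (fun N : ℕ => ∑ n ∈ Finset.range N,
        4 * Real.sin ((2 * ((n : ℝ) + 1) - 1) * x) / ((2 * ((n : ℝ) + 1) - 1) * Real.pi))
      Filter.atTop
      (nhds (if 0 < x then 1 else if x = 0 then 0 else -1)) := by
  have key : ∀ y : ℝ, 0 < y → y < Real.pi →
      Filter.Tendsto (fun N : ℕ => ∑ n ∈ Finset.range N,
        4 * Real.sin ((2 * ((n : ℝ) + 1) - 1) * y) / ((2 * ((n : ℝ) + 1) - 1) * Real.pi))
        Filter.atTop (nhds 1) := by
    intro y h0 hπ
    have h := (sq7_aux_pos h0 hπ).const_mul (4 / Real.pi)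
    have hπ0 : Real.pi ≠ 0 := Real.pi_ne_zero
    have h4 : 4 / Real.pi * (Real.pi / 4) = 1 := by field_simp
    rw [h4] at h
    refine h.congr fun N => ?_
    rw [Finset.mul_sum]
    refine Finset.sum_congr rfl fun n _ => ?_
    have hne : (2 * (n:ℝ) + 1) ≠ 0 := by positivity
    have harg : (2 * ((n:ℝ) + 1) - 1) = 2 * (n:ℝ) + 1 := by ring
    rw [harg, div_mul_div_comm, mul_comm Real.pi]
  rcases lt_trichotomy x 0 with hneg | hzero | hpos
  · rw [if_neg (by linarith), if_neg (by linarith)]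
    have h := (key (-x) (by linarith) (by linarith)).neg
    rw [show -(1:ℝ) = -1 from rfl] at h
    refine h.congr fun N => ?_
    rw [← Finset.sum_neg_distrib]
    refine Finset.sum_congr rfl fun n _ => ?_
    rw [show (2 * ((n:ℝ) + 1) - 1) * (-x) = -((2 * ((n:ℝ) + 1) - 1) * x) by ring, Real.sin_neg]
    ring
  · rw [if_neg (by simp [hzero]), if_pos hzero, hzero]
    simpa using tendsto_const_nhds (α := ℝ) (f := atTop (α := ℕ)) (a := 0)
  · rw [if_pos hpos]
    exact key x hpos hx₂
end

section
/- The discrete Legendre orthogonal polynomials are orthogonal: for every N ≥ 1 and all indices m, n with 0 ≤ m, n ≤ N − 1 and m ≠ n, the sum Σ_{k=0}^{N−1} D_m(k;N)·D_n(k;N) equals 0. -/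
open Finset

/-- The fading factorial `x^{(i)} = ∏_{j=0}^{i−1} (x − j)`. -/
noncomputable def fadingFactorial (x : ℝ) (i : ℕ) : ℝ :=
  ∏ j ∈ Finset.range i, (x - (j : ℝ))

/-- The unnormalized discrete Legendre orthogonal polynomial (DLOP) of degree `n`
with `N` samples: `D n k = ∑_{i=0}^{n} (−1)^i C(n,i) C(n+i,i) k^{(i)} / (N−1)^{(i)}`. -/
noncomputable def dlop (N n k : ℕ) : ℝ :=
  ∑ i ∈ Finset.range (n + 1),
    (-1 : ℝ) ^ i * (n.choose i : ℝ) * ((n + i).choose i : ℝ) *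
      fadingFactorial (k : ℝ) i / fadingFactorial ((N : ℝ) - 1) i

open Polynomial

lemma fading_cast (M i : ℕ) : fadingFactorial (M : ℝ) i = (M.descFactorial i : ℝ) := by
  induction i with
  | zero => simp [fadingFactorial]
  | succ i ih =>
    rw [fadingFactorial, Finset.prod_range_succ, ← fadingFactorial, ih, Nat.descFactorial_succ]
    rcases le_or_gt i M with h | h
    · push_cast [h]; ring
    · rw [Nat.descFactorial_eq_zero_iff_lt.2 h]; simp

lemma sum_range_choose' (M j : ℕ) :
    ∑ x ∈ Finset.range (M + 1), x.choose j = (M + 1).choose (j + 1) := by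
  rw [← Nat.sum_Icc_choose]
  refine (Finset.sum_subset (fun x hx => ?_) (fun x hx hx' => ?_)).symm
  · simp at hx ⊢; omega
  · simp at hx hx'; exact Nat.choose_eq_zero_of_lt (by omega)

lemma sum_choose_reflect (M j : ℕ) :
    ∑ x ∈ Finset.range (M + 1), (M - x).choose j = (M + 1).choose (j + 1) := by
  rw [← sum_range_choose' M j]
  exact Finset.sum_range_reflect (fun x => x.choose j) (M + 1)

lemma sum_choose_mul_choose (M : ℕ) : ∀ i j : ℕ,
    ∑ x ∈ Finset.range (M + 1), x.choose i * (M - x).choose j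
      = (M + 1).choose (i + j + 1) := by
  induction M with
  | zero =>
    intro i j
    cases i <;> cases j <;> simp [Nat.choose]
  | succ M ih =>
    intro i j
    cases i with
    | zero => simpa using sum_choose_reflect (M + 1) j
    | succ i =>
      rw [Finset.sum_range_succ', ]
      have h1 : ∀ x, (x + 1).choose (i + 1) * (M + 1 - (x + 1)).choose j
          = x.choose i * (M - x).choose j + x.choose (i + 1) * (M - x).choose j := by
        intro x
        rw [Nat.choose_succ_succ, show M + 1 - (x + 1) = M - x by omega, add_mul]
      simp only [h1]
      rw [Finset.sum_add_distrib, ih, ih]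
      have h2 : i + 1 + j + 1 = (i + j + 1) + 1 := by omega
      have h3 := Nat.choose_succ_succ (M + 1) (i + j + 1)
      simp only [Nat.succ_eq_add_one] at h3
      rw [h2, h3]
      simp

lemma choose_ie : ∀ (y : ℕ), ∀ (M i : ℕ), y ≤ M →
    (((M - y).choose i : ℕ) : ℝ)
      = ∑ j ∈ Finset.range (i + 1),
          (-1:ℝ)^j * (y.choose j : ℝ) * ((M - j).choose (i - j) : ℝ) := by
  intro y
  induction y with
  | zero =>
    intro M i _
    rw [Finset.sum_eq_single 0]
    · simp
    · intro j hj hj0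
      rcases Nat.exists_eq_succ_of_ne_zero hj0 with ⟨j', rfl⟩
      simp
    · simp
  | succ y IH =>
    intro M i hyM
    cases i with
    | zero => simp
    | succ i =>
      have hyM' : y ≤ M - 1 := by omega
      have hyM'' : y ≤ M := by omega
      rw [Finset.sum_range_succ']
      have key : ∀ j : ℕ,
          (-1:ℝ)^(j+1) * ((y+1).choose (j+1) : ℝ) * ((M - (j+1)).choose (i+1 - (j+1)) : ℝ)
          = -((-1:ℝ)^j * (y.choose j : ℝ) * (((M-1) - j).choose (i - j) : ℝ))
            - (-1:ℝ)^j * (y.choose (j+1) : ℝ) * (((M-1) - j).choose (i - j) : ℝ) := by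
        intro j
        rw [Nat.choose_succ_succ y j, show M - (j+1) = (M-1) - j by omega,
          show i + 1 - (j+1) = i - j by omega]
        push_cast
        ring
      simp only [key]
      rw [Finset.sum_sub_distrib, Finset.sum_neg_distrib]
      have hA : ∑ j ∈ Finset.range (i + 1),
          (-1:ℝ)^j * (y.choose j : ℝ) * (((M-1) - j).choose (i - j) : ℝ)
          = (((M - 1 - y).choose i : ℕ) : ℝ) := (IH (M-1) i hyM').symm
      have hF := IH M (i+1) hyM''
      rw [Finset.sum_range_succ'] at hF
      have key2 : ∀ j : ℕ,
          (-1:ℝ)^(j+1) * (y.choose (j+1) : ℝ) * ((M - (j+1)).choose (i+1 - (j+1)) : ℝ)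
          = -((-1:ℝ)^j * (y.choose (j+1) : ℝ) * (((M-1) - j).choose (i - j) : ℝ)) := by
        intro j
        rw [show M - (j+1) = (M-1) - j by omega, show i + 1 - (j+1) = i - j by omega]
        ring
      simp only [key2] at hF
      rw [Finset.sum_neg_distrib] at hF
      -- hF : ↑((M - y).choose (i+1)) = -B + C(M, i+1)-ish
      have hpas : ((M - (y+1)).choose (i+1) : ℝ) + ((M - (y+1)).choose i : ℝ)
          = ((M - y).choose (i+1) : ℝ) := by
        have : M - y = (M - (y+1)) + 1 := by omega
        rw [this, Nat.choose_succ_succ (M - (y+1)) i]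
        push_cast; ring
      rw [hA]
      have hM1 : M - 1 - y = M - (y + 1) := by omega
      rw [hM1] at hA ⊢
      simp only [pow_zero, Nat.choose_zero_right, Nat.cast_one, one_mul, Nat.sub_zero,
        Nat.cast_ofNat] at hF ⊢
      linarith [hF, hpas]

lemma alt_sum_poly : ∀ (n : ℕ) (p : Polynomial ℝ), p.degree < n →
    ∑ i ∈ Finset.range (n + 1), (-1:ℝ)^i * (n.choose i : ℝ) * p.eval (i : ℝ) = 0 := by
  intro n
  induction n with
  | zero =>
    intro p hp
    have : p = 0 := by
      rw [← Polynomial.degree_eq_bot]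
      exact Nat.WithBot.lt_zero_iff.mp (by exact_mod_cast hp)
    simp [this]
  | succ n IH =>
    intro p hp
    by_cases hp0 : p = 0
    · simp [hp0]
    set p1 := p.comp (X + C 1) with hp1
    have hxc : (X + C 1 : ℝ[X]).natDegree = 1 := Polynomial.natDegree_X_add_C 1
    have hxlc : (X + C 1 : ℝ[X]).leadingCoeff = 1 := (Polynomial.monic_X_add_C 1)
    have h1 : p1.natDegree = p.natDegree := by
      rw [hp1, Polynomial.natDegree_comp, hxc, mul_one]
    have hlc : p1.leadingCoeff = p.leadingCoeff := by
      rw [hp1, Polynomial.leadingCoeff_comp (by rw [hxc]; norm_num), hxlc, one_pow, mul_one]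
    have h10 : p1 ≠ 0 := by
      intro h
      apply hp0
      apply Polynomial.leadingCoeff_eq_zero.mp
      rw [← hlc, h, Polynomial.leadingCoeff_zero]
    have hdeg1 : p1.degree = p.degree := by
      rw [Polynomial.degree_eq_natDegree h10, Polynomial.degree_eq_natDegree hp0, h1]
    have hq : (p1 - p).degree < n := by
      have h2 : (p1 - p).degree < p.degree := by
        have h3 := Polynomial.degree_sub_lt hdeg1 h10 hlc
        rwa [hdeg1] at h3
      have hple : p.degree ≤ n := Order.le_of_lt_succ (by exact_mod_cast hp)
      exact lt_of_lt_of_le h2 hple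
    have hrec : ∑ i ∈ Finset.range (n + 1 + 1), (-1:ℝ)^i * ((n+1).choose i : ℝ) * p.eval (i:ℝ)
        = - ∑ i ∈ Finset.range (n + 1), (-1:ℝ)^i * (n.choose i : ℝ) * (p1 - p).eval (i:ℝ) := by
      rw [Finset.sum_range_succ']
      have key : ∀ i : ℕ, (-1:ℝ)^(i+1) * ((n+1).choose (i+1) : ℝ) * p.eval ((i+1 : ℕ):ℝ)
          = -((-1:ℝ)^i * (n.choose i : ℝ) * p.eval ((i:ℝ) + 1))
            + (-1:ℝ)^(i+1) * (n.choose (i+1) : ℝ) * p.eval ((i:ℝ) + 1) := by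
        intro i
        rw [Nat.choose_succ_succ n i]
        push_cast
        ring
      simp only [key]
      rw [Finset.sum_add_distrib, Finset.sum_neg_distrib]
      have hS : ∑ i ∈ Finset.range (n + 1), (-1:ℝ)^(i+1) * (n.choose (i+1) : ℝ) * p.eval ((i:ℝ) + 1)
            + ((-1:ℝ)^0 * ((n+1).choose 0 : ℝ) * p.eval ((0:ℕ):ℝ))
          = ∑ i ∈ Finset.range (n + 1 + 1), (-1:ℝ)^i * (n.choose i : ℝ) * p.eval (i:ℝ) := by
        rw [Finset.sum_range_succ' (fun i => (-1:ℝ)^i * (n.choose i : ℝ) * p.eval (i:ℝ)) (n+1)]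
        push_cast
        simp
      have hS2 : ∑ i ∈ Finset.range (n + 1 + 1), (-1:ℝ)^i * (n.choose i : ℝ) * p.eval (i:ℝ)
          = ∑ i ∈ Finset.range (n + 1), (-1:ℝ)^i * (n.choose i : ℝ) * p.eval (i:ℝ) := by
        rw [Finset.sum_range_succ]
        simp [Nat.choose_succ_self]
      have heval : ∀ i : ℕ, (p1 - p).eval (i:ℝ) = p.eval ((i:ℝ) + 1) - p.eval (i:ℝ) := by
        intro i
        simp [hp1, Polynomial.eval_comp]
      simp only [heval, mul_sub]
      rw [Finset.sum_sub_distrib]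
      push_cast at hS hS2 ⊢
      linarith [hS, hS2]
    rw [hrec, IH (p1 - p) hq, neg_zero]

lemma desc_cast_div {M i : ℕ} (h : i ≤ M) :
    ((M.descFactorial i : ℕ) : ℝ) = (M.factorial : ℝ) / ((M - i).factorial : ℝ) := by
  rw [eq_div_iff (by positivity)]
  exact_mod_cast (by rw [mul_comm]; exact Nat.factorial_mul_descFactorial h :
    M.descFactorial i * (M - i).factorial = M.factorial)

lemma scalar_id {N n i j : ℕ} (hN : 1 ≤ N) (hn : n ≤ N - 1) (hj : j < n) (hi : i ≤ n) :
    (((n+i).choose i : ℕ) : ℝ) * (i.factorial : ℝ) * ((N.choose (i+j+1) : ℕ) : ℝ)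
        / (((N-1).descFactorial i : ℕ) : ℝ)
    = ((N:ℝ) / (n.factorial : ℝ)) * (((n+i).descFactorial (n-j-1) : ℕ) : ℝ)
        * (((N-1-i).descFactorial j : ℕ) : ℝ) := by
  rcases lt_or_ge N (i+j+1) with hbig | hok
  · have hz : (N-1-i).descFactorial j = 0 := Nat.descFactorial_eq_zero_iff_lt.2 (by omega)
    rw [Nat.choose_eq_zero_of_lt hbig, hz]
    simp
  · have h1 : i ≤ N - 1 := by omega
    have h2 : j ≤ N - 1 - i := by omega
    have h3 : n - j - 1 ≤ n + i := by omega
    have e1 : (((n+i).choose i : ℕ) : ℝ)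
        = ((n+i).factorial : ℝ) / ((i.factorial : ℝ) * (n.factorial : ℝ)) := by
      rw [Nat.cast_choose ℝ (Nat.le_add_left i n), show n + i - i = n by omega]
    have e2 : ((N.choose (i+j+1) : ℕ) : ℝ)
        = (N.factorial : ℝ) / (((i+j+1).factorial : ℝ) * ((N-1-i-j).factorial : ℝ)) := by
      rw [Nat.cast_choose ℝ hok, show N - (i+j+1) = N-1-i-j by omega]
    have e3 := desc_cast_div h1
    have e4 := desc_cast_div h3
    have e5 := desc_cast_div h2
    rw [show n + i - (n-j-1) = i+j+1 by omega] at e4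
    rw [show N - 1 - i - j = N-1-i-j by omega] at e5
    have eN : (N.factorial : ℝ) = (N : ℝ) * ((N-1).factorial : ℝ) := by
      conv_lhs => rw [show N = (N-1)+1 by omega]
      rw [Nat.factorial_succ]
      push_cast [Nat.cast_sub hN]
      ring
    rw [e1, e2, e3, e4, e5, eN]
    have f1 : (((n+i).factorial : ℕ) : ℝ) ≠ 0 := by positivity
    have f2 : ((i.factorial : ℕ) : ℝ) ≠ 0 := by positivity
    have f3 : ((n.factorial : ℕ) : ℝ) ≠ 0 := by positivity
    have f4 : (((i+j+1).factorial : ℕ) : ℝ) ≠ 0 := by positivity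
    have f5 : (((N-1-i-j).factorial : ℕ) : ℝ) ≠ 0 := by positivity
    have f6 : (((N-1).factorial : ℕ) : ℝ) ≠ 0 := by positivity
    have f7 : (((N-1-i).factorial : ℕ) : ℝ) ≠ 0 := by positivity
    field_simp
noncomputable def Pol (N n j : ℕ) : Polynomial ℝ :=
  (∏ t ∈ Finset.range (n - j - 1), (X + C ((j:ℝ) + 2 + t)))
  * ∏ t ∈ Finset.range j, (C (((N-1-t : ℕ)) : ℝ) - X)

lemma pol_degree {N n j : ℕ} (hj : j < n) : (Pol N n j).degree < n := by
  have hd1 : (∏ t ∈ Finset.range (n - j - 1), (X + C ((j:ℝ) + 2 + t))).degree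
      = ((n - j - 1 : ℕ) : WithBot ℕ) := by
    rw [Polynomial.degree_prod]
    have h1 : ∀ x ∈ Finset.range (n - j - 1), (X + C ((j:ℝ) + 2 + (x:ℝ))).degree = 1 :=
      fun x _ => Polynomial.degree_X_add_C _
    rw [Finset.sum_congr rfl h1, Finset.sum_const, Finset.card_range, nsmul_eq_mul, mul_one]
  have hd2 : (∏ t ∈ Finset.range j, (C (((N-1-t : ℕ)) : ℝ) - X)).degree
      = ((j : ℕ) : WithBot ℕ) := by
    rw [Polynomial.degree_prod]
    have : ∀ t : ℕ, (C (((N-1-t : ℕ)) : ℝ) - X).degree = 1 := by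
      intro t
      rw [show (C (((N-1-t : ℕ)) : ℝ) - X) = -(X - C (((N-1-t : ℕ)) : ℝ)) by ring,
        Polynomial.degree_neg, Polynomial.degree_X_sub_C]
    rw [Finset.sum_congr rfl (fun x _ => this x), Finset.sum_const, Finset.card_range,
      nsmul_eq_mul, mul_one]
  unfold Pol
  rw [Polynomial.degree_mul, hd1, hd2]
  rw [← Nat.cast_add]
  exact_mod_cast (by omega : n - j - 1 + j < n)

lemma pol_eval {N n j i : ℕ} (hN : 1 ≤ N) (hn : n ≤ N - 1) (hj : j < n) (hi : i ≤ N - 1) :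
    (Pol N n j).eval (i : ℝ)
      = (((n+i).descFactorial (n-j-1) : ℕ) : ℝ) * (((N-1-i).descFactorial j : ℕ) : ℝ) := by
  unfold Pol
  rw [Polynomial.eval_mul, Polynomial.eval_prod, Polynomial.eval_prod]
  congr 1
  · simp only [Polynomial.eval_add, Polynomial.eval_X, Polynomial.eval_C]
    rw [← fading_cast, fadingFactorial,
      ← Finset.prod_range_reflect (fun t => ((n+i : ℕ) : ℝ) - t) (n - j - 1)]
    refine Finset.prod_congr rfl (fun t ht => ?_)
    simp only [Finset.mem_range] at ht
    rw [show n - j - 1 - 1 - t = n - (j + 2 + t) by omega,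
      Nat.cast_sub (by omega : j + 2 + t ≤ n)]
    push_cast
    ring
  · simp only [Polynomial.eval_sub, Polynomial.eval_X, Polynomial.eval_C]
    rw [← fading_cast, fadingFactorial]
    refine Finset.prod_congr rfl (fun t ht => ?_)
    simp only [Finset.mem_range] at ht
    rw [Nat.cast_sub (by omega : t ≤ N - 1), Nat.cast_sub (by omega : i ≤ N - 1)]
    ring
lemma key_orth (N n j : ℕ) (hN : 1 ≤ N) (hn : n ≤ N - 1) (hj : j < n) :
    ∑ x ∈ Finset.range N, (((N - 1 - x).choose j : ℕ) : ℝ) * dlop N n x = 0 := by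
  have hNsub : ((N:ℝ) - 1) = ((N - 1 : ℕ) : ℝ) := by
    rw [Nat.cast_sub hN]; norm_num
  have hswap : ∑ x ∈ Finset.range N, (((N - 1 - x).choose j : ℕ) : ℝ) * dlop N n x
      = ∑ i ∈ Finset.range (n+1), ∑ x ∈ Finset.range N,
          (((N - 1 - x).choose j : ℕ) : ℝ) *
          ((-1:ℝ)^i * (n.choose i : ℝ) * ((n+i).choose i : ℝ) *
            fadingFactorial (x : ℝ) i / fadingFactorial ((N:ℝ) - 1) i) := by
    rw [Finset.sum_comm]
    exact Finset.sum_congr rfl fun x _ => by rw [dlop, Finset.mul_sum]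
  rw [hswap]
  have inner : ∀ i ∈ Finset.range (n+1),
      (∑ x ∈ Finset.range N, (((N - 1 - x).choose j : ℕ) : ℝ) *
          ((-1:ℝ)^i * (n.choose i : ℝ) * ((n+i).choose i : ℝ) *
            fadingFactorial (x : ℝ) i / fadingFactorial ((N:ℝ) - 1) i))
      = ((N:ℝ) / (n.factorial : ℝ)) *
          ((-1:ℝ)^i * (n.choose i : ℝ) * (Pol N n j).eval (i : ℝ)) := by
    intro i hi
    simp only [Finset.mem_range] at hi
    have hin : i ≤ n := by omega
    have hiN : i ≤ N - 1 := by omega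
    have hD : fadingFactorial ((N:ℝ) - 1) i = (((N-1).descFactorial i : ℕ) : ℝ) := by
      rw [hNsub, fading_cast]
    have step1 : ∀ x : ℕ, (((N - 1 - x).choose j : ℕ) : ℝ) *
          ((-1:ℝ)^i * (n.choose i : ℝ) * ((n+i).choose i : ℝ) *
            fadingFactorial (x : ℝ) i / fadingFactorial ((N:ℝ) - 1) i)
        = ((-1:ℝ)^i * (n.choose i : ℝ) * ((n+i).choose i : ℝ) /
            (((N-1).descFactorial i : ℕ) : ℝ)) *
          (((x.choose i * (N - 1 - x).choose j : ℕ) : ℝ) * (i.factorial : ℝ)) := by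
      intro x
      rw [hD, fading_cast, Nat.descFactorial_eq_factorial_mul_choose]
      push_cast
      ring
    rw [Finset.sum_congr rfl (fun x _ => step1 x), ← Finset.mul_sum]
    have hsum : ∑ x ∈ Finset.range N, (((x.choose i * (N - 1 - x).choose j : ℕ) : ℝ)
          * (i.factorial : ℝ))
        = ((N.choose (i+j+1) : ℕ) : ℝ) * (i.factorial : ℝ) := by
      rw [← Finset.sum_mul]
      congr 1
      rw [← Nat.cast_sum]
      rw [show Finset.range N = Finset.range ((N-1)+1) by congr 1; omega]
      rw [sum_choose_mul_choose (N-1) i j]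
      congr 2
      omega
    rw [hsum]
    have := scalar_id (N := N) (n := n) (i := i) (j := j) hN hn hj hin
    rw [pol_eval hN hn hj hiN]
    linear_combination ((-1:ℝ)^i * (n.choose i : ℝ)) * this
  rw [Finset.sum_congr rfl inner, ← Finset.mul_sum,
    alt_sum_poly n (Pol N n j) (pol_degree hj), mul_zero]
lemma dlop_expand (N m x : ℕ) (hN : 1 ≤ N) (hm : m ≤ N - 1) (hx : x < N) :
    dlop N m x = ∑ i ∈ Finset.range (m+1), ∑ j ∈ Finset.range (i+1),
      ((-1:ℝ)^i * (m.choose i : ℝ) * ((m+i).choose i : ℝ) * (i.factorial : ℝ)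
          * (-1:ℝ)^j * (((N-1-j).choose (i-j) : ℕ) : ℝ)
          / (((N-1).descFactorial i : ℕ) : ℝ))
        * (((N-1-x).choose j : ℕ) : ℝ) := by
  rw [dlop]
  refine Finset.sum_congr rfl fun i hi => ?_
  simp only [Finset.mem_range] at hi
  have hiN : i ≤ N - 1 := by omega
  have hxM : x ≤ N - 1 := by omega
  have hD : fadingFactorial ((N:ℝ) - 1) i = (((N-1).descFactorial i : ℕ) : ℝ) := by
    rw [show ((N:ℝ) - 1) = ((N-1:ℕ):ℝ) by rw [Nat.cast_sub hN]; norm_num, fading_cast]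
  rw [hD, fading_cast, Nat.descFactorial_eq_factorial_mul_choose, Nat.cast_mul]
  have hie := choose_ie (N-1-x) (N-1) i (by omega)
  rw [show N-1-(N-1-x) = x by omega] at hie
  rw [hie, Finset.mul_sum, Finset.mul_sum, Finset.sum_div]
  refine Finset.sum_congr rfl fun j hj => ?_
  ring

lemma ortho_lt (N m n : ℕ) (hN : 1 ≤ N) (hn : n ≤ N - 1) (hmn : m < n) :
    ∑ x ∈ Finset.range N, dlop N m x * dlop N n x = 0 := by
  have hm : m ≤ N - 1 := by omega
  have h1 : ∑ x ∈ Finset.range N, dlop N m x * dlop N n x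
      = ∑ x ∈ Finset.range N, ∑ i ∈ Finset.range (m+1), ∑ j ∈ Finset.range (i+1),
          ((-1:ℝ)^i * (m.choose i : ℝ) * ((m+i).choose i : ℝ) * (i.factorial : ℝ)
              * (-1:ℝ)^j * (((N-1-j).choose (i-j) : ℕ) : ℝ)
              / (((N-1).descFactorial i : ℕ) : ℝ))
            * ((((N-1-x).choose j : ℕ) : ℝ) * dlop N n x) := by
    refine Finset.sum_congr rfl fun x hx => ?_
    simp only [Finset.mem_range] at hx
    rw [dlop_expand N m x hN hm hx, Finset.sum_mul]
    refine Finset.sum_congr rfl fun i _ => ?_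
    rw [Finset.sum_mul]
    exact Finset.sum_congr rfl fun j _ => by ring
  rw [h1, Finset.sum_comm]
  refine Finset.sum_eq_zero fun i hi => ?_
  rw [Finset.sum_comm]
  refine Finset.sum_eq_zero fun j hj => ?_
  simp only [Finset.mem_range] at hi hj
  rw [← Finset.mul_sum, key_orth N n j hN hn (by omega), mul_zero]

theorem stmt_10 (N m n : ℕ) (hN : 1 ≤ N) (hm : m ≤ N - 1) (hn : n ≤ N - 1)
    (hmn : m ≠ n) :
    ∑ k ∈ Finset.range N, dlop N m k * dlop N n k = 0 := by
  rcases Nat.lt_or_ge m n with h | h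
  · exact ortho_lt N m n hN hn h
  · have h2 : n < m := by omega
    rw [Finset.sum_congr rfl fun k _ => mul_comm (dlop N m k) (dlop N n k)]
    exact ortho_lt N n m hN hm h2
end

section
/- The squared norm of the discrete Legendre orthogonal polynomial is given by the normalization factor of Neuman and Schonbach: for every N ≥ 1 and every n with 0 ≤ n ≤ N − 1, Σ_{k=0}^{N−1} D_n(k;N)² = (N+n)^{(n+1)} / ((2n+1) · (N−1)^{(n)}). -/
open Finset

open scoped fwdDiff

namespace FFaux

local notation "ff" => fadingFactorial
local notation "dd" => fwdDiff (1 : ℕ)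

lemma ff_zero (x : ℝ) : ff x 0 = 1 := by simp [fadingFactorial]

lemma ff_succ (x : ℝ) (i : ℕ) : ff x (i + 1) = ff x i * (x - i) := by
  simp [fadingFactorial, Finset.prod_range_succ]

lemma ff_succ' (x : ℝ) (i : ℕ) : ff x (i + 1) = x * ff (x - 1) i := by
  rw [fadingFactorial, Finset.prod_range_succ', fadingFactorial]
  simp only [Nat.cast_zero, sub_zero, Nat.cast_add, Nat.cast_one]
  rw [mul_comm]
  congr 1
  apply Finset.prod_congr rfl
  intro j _
  push_cast
  ring_nf

lemma ff_int_zero (x : ℝ) (i j : ℕ) (hj : j < i) (hx : x = j) : ff x i = 0 := by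
  apply Finset.prod_eq_zero (Finset.mem_range.2 hj)
  rw [hx, sub_self]

lemma ff_natCast (a b : ℕ) : ff (a : ℝ) b = (a.descFactorial b : ℝ) := by
  induction b with
  | zero => simp [ff_zero]
  | succ b ih =>
    rcases le_or_gt (b + 1) a with h | h
    · rw [ff_succ, ih, Nat.descFactorial_succ, Nat.cast_mul, Nat.cast_sub (by omega)]
      ring
    · rw [Nat.descFactorial_eq_zero_iff_lt.2 h, Nat.cast_zero]
      rcases le_or_gt (b + 1) a with h' | h'
      · omega
      · exact ff_int_zero _ _ a (by omega) rfl

lemma ff_reflect (x : ℝ) (n : ℕ) : ff x n = (-1) ^ n * ff ((n : ℝ) - 1 - x) n := by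
  rw [fadingFactorial, fadingFactorial,
    ← Finset.prod_range_reflect (fun j => (n : ℝ) - 1 - x - j) n,
    show ((-1 : ℝ)) ^ n = ∏ _j ∈ Finset.range n, (-1 : ℝ) by simp,
    ← Finset.prod_mul_distrib]
  apply Finset.prod_congr rfl
  intro j hj
  rw [Finset.mem_range] at hj
  have hc : ((n - 1 - j : ℕ) : ℝ) = (n : ℝ) - 1 - j := by
    rw [Nat.cast_sub (by omega), Nat.cast_sub (by omega)]
    simp
  simp only [hc]
  ring

lemma ff_split (x : ℝ) (a b : ℕ) : ff x (a + b) = ff x a * ff (x - a) b := by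
  rw [fadingFactorial, Finset.prod_range_add, fadingFactorial, fadingFactorial]
  congr 1
  apply Finset.prod_congr rfl
  intro j _
  push_cast
  ring

lemma ff_shift (x : ℝ) (n : ℕ) : ff (x + 1) (n + 1) - ff x (n + 1) = (n + 1) * ff x n := by
  have h1 : ff (x + 1) (n + 1) = (x + 1) * ff x n := by
    rw [ff_succ']; ring_nf
  rw [h1, ff_succ]
  ring

/-- Vandermonde identity for fading factorials. -/
lemma ff_add (x y : ℝ) : ∀ n : ℕ,
    ff (x + y) n = ∑ r ∈ Finset.range (n + 1),
      (n.choose r : ℝ) * ff x r * ff y (n - r) := by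
  intro n
  induction n with
  | zero => simp [ff_zero]
  | succ n ih =>
    rw [ff_succ, ih, Finset.sum_mul]
    have step : ∀ r ∈ Finset.range (n + 1),
        (n.choose r : ℝ) * ff x r * ff y (n - r) * (x + y - n)
        = (n.choose r : ℝ) * ff x (r + 1) * ff y (n - r)
          + (n.choose r : ℝ) * ff x r * ff y (n - r + 1) := by
      intro r hr
      rw [Finset.mem_range] at hr
      have hc : ((n - r : ℕ) : ℝ) = (n : ℝ) - r := by
        rw [Nat.cast_sub (by omega)]
      rw [ff_succ x r, ff_succ y (n - r), hc]
      ring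
    rw [Finset.sum_congr rfl step, Finset.sum_add_distrib]
    -- target sum, peel the first term
    rw [Finset.sum_range_succ' (fun r => ((n + 1).choose r : ℝ) * ff x r * ff y (n + 1 - r)) (n + 1)]
    have pascal : ∀ r, (((n + 1).choose (r + 1) : ℕ) : ℝ) = (n.choose (r + 1) : ℝ) + (n.choose r : ℝ) := by
      intro r
      rw [Nat.choose_succ_succ]
      push_cast
      ring
    have expand : ∀ r ∈ Finset.range (n + 1),
        ((n + 1).choose (r + 1) : ℝ) * ff x (r + 1) * ff y (n + 1 - (r + 1))
        = (n.choose (r + 1) : ℝ) * ff x (r + 1) * ff y (n - r)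
          + (n.choose r : ℝ) * ff x (r + 1) * ff y (n - r) := by
      intro r hr
      have : n + 1 - (r + 1) = n - r := by omega
      rw [this, pascal]
      ring
    rw [Finset.sum_congr rfl expand, Finset.sum_add_distrib]
    have e0 : ((n + 1).choose 0 : ℝ) * ff x 0 * ff y (n + 1 - 0) = ff y (n + 1) := by
      simp [ff_zero]
    rw [e0]
    -- second original sum: peel first term
    have second : ∑ r ∈ Finset.range (n + 1), (n.choose r : ℝ) * ff x r * ff y (n - r + 1)
        = ff y (n + 1) + ∑ r ∈ Finset.range n,
            (n.choose (r + 1) : ℝ) * ff x (r + 1) * ff y (n - (r + 1) + 1) := by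
      rw [Finset.sum_range_succ' (fun r => (n.choose r : ℝ) * ff x r * ff y (n - r + 1)) n]
      simp [ff_zero]
      ring
    have third : ∑ r ∈ Finset.range (n + 1), (n.choose (r + 1) : ℝ) * ff x (r + 1) * ff y (n - r)
        = ∑ r ∈ Finset.range n, (n.choose (r + 1) : ℝ) * ff x (r + 1) * ff y (n - (r + 1) + 1) := by
      rw [Finset.sum_range_succ]
      rw [Nat.choose_succ_self]
      simp only [Nat.cast_zero, zero_mul]
      rw [add_zero]
      apply Finset.sum_congr rfl
      intro r hr
      rw [Finset.mem_range] at hr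
      congr 2
      omega
    rw [second, third]
    ring


lemma ff_zero_eval (j : ℕ) : ff (0 : ℝ) j = if j = 0 then 1 else 0 := by
  cases j with
  | zero => simp [ff_zero]
  | succ j => exact if_neg (Nat.succ_ne_zero j) ▸ ff_int_zero (0 : ℝ) (j + 1) 0 (by omega) (by simp)

/-- basis functions -/
noncomputable def ee (i : ℕ) : ℕ → ℝ := fun k => ff (k : ℝ) i

lemma dd_ee (i : ℕ) : dd (ee (i + 1)) = fun k => ((i : ℝ) + 1) * ee i k := by
  funext k
  show ee (i + 1) (k + 1) - ee (i + 1) k = ((i : ℝ) + 1) * ee i k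
  unfold ee
  have : ((k + 1 : ℕ) : ℝ) = (k : ℝ) + 1 := by push_cast; ring
  rw [this, ff_shift]

lemma dd_iter_zero_fun (m : ℕ) : dd^[m] (fun _ => (0 : ℝ) : ℕ → ℝ) = fun _ => 0 := by
  induction m with
  | zero => rfl
  | succ m ih =>
    rw [Function.iterate_succ_apply]
    have : dd (fun _ => (0 : ℝ) : ℕ → ℝ) = fun _ => (0 : ℝ) := by
      funext k; simp [fwdDiff]
    rw [this, ih]

lemma dd_iter_ee (m i : ℕ) :
    dd^[m] (ee i) = fun k => (i.descFactorial m : ℝ) * ee (i - m) k := by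
  induction m generalizing i with
  | zero => simp [Nat.descFactorial]
  | succ m ih =>
    rw [Function.iterate_succ_apply]
    cases i with
    | zero =>
      have h0 : dd (ee 0) = fun _ => (0 : ℝ) := by
        funext k
        show ee 0 (k + 1) - ee 0 k = 0
        simp [ee, ff_zero]
      rw [h0, dd_iter_zero_fun]
      simp
    | succ i =>
      rw [dd_ee]
      have : (fun k => ((i : ℝ) + 1) * ee i k) = ((i : ℝ) + 1) • ee i := by
        funext k; simp
      rw [this, fwdDiff_iter_const_smul, ih]
      funext k
      simp only [Pi.smul_apply, smul_eq_mul, Nat.succ_descFactorial_succ, Nat.succ_sub_succ]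
      push_cast
      ring

lemma dd_iter_ee_zero (m i : ℕ) :
    dd^[m] (ee i) 0 = if i = m then (m.factorial : ℝ) else 0 := by
  rw [dd_iter_ee]
  simp only [ee, Nat.cast_zero, ff_zero_eval]
  rcases eq_or_ne i m with rfl | hne
  · simp [Nat.descFactorial_self]
  · rcases lt_or_gt_of_ne hne with h | h
    · simp [Nat.descFactorial_eq_zero_iff_lt.2 h, hne]
    · rw [if_neg (by omega : ¬ i - m = 0), if_neg hne]
      ring


lemma key_nat (n j r t : ℕ) (hr : r ≤ n) (hn : n ≤ j + r) (ht : t ≤ j + r - n) :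
    (n + j).choose (n + t) * (n + t).descFactorial n * (j - t).descFactorial (n - r)
      * (j + r - n).factorial
    = (j + r - n).choose t * (n + j).factorial := by
  set J := j + r - n with hJ
  have htj : t ≤ j := by omega
  have h1 : t.factorial * (n + t).descFactorial n = (n + t).factorial := by
    have h := Nat.factorial_mul_descFactorial (show n ≤ n + t by omega)
    rwa [show n + t - n = t by omega] at h
  have h2 : (J - t).factorial * (j - t).descFactorial (n - r) = (j - t).factorial := by
    have h := Nat.factorial_mul_descFactorial (show n - r ≤ j - t by omega)
    rwa [show j - t - (n - r) = J - t by omega] at h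
  have h3 : (n + j).choose (n + t) * (n + t).factorial * (j - t).factorial
      = (n + j).factorial := by
    have h := Nat.choose_mul_factorial_mul_factorial (show n + t ≤ n + j by omega)
    rwa [show n + j - (n + t) = j - t by omega] at h
  have h4 : J.choose t * t.factorial * (J - t).factorial = J.factorial :=
    Nat.choose_mul_factorial_mul_factorial ht
  apply Nat.eq_of_mul_eq_mul_left (Nat.mul_pos t.factorial_pos (J - t).factorial_pos)
  calc t.factorial * (J - t).factorial
        * ((n + j).choose (n + t) * (n + t).descFactorial n * (j - t).descFactorial (n - r)
            * J.factorial)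
      = (n + j).choose (n + t) * (t.factorial * (n + t).descFactorial n)
          * ((J - t).factorial * (j - t).descFactorial (n - r)) * J.factorial := by ring
    _ = (n + j).choose (n + t) * (n + t).factorial * (j - t).factorial * J.factorial := by
        rw [h1, h2]
    _ = (n + j).factorial * J.factorial := by rw [h3]
    _ = (J.choose t * t.factorial * (J - t).factorial) * (n + j).factorial := by rw [h4]; ring
    _ = t.factorial * (J - t).factorial * (J.choose t * (n + j).factorial) := by ring

lemma alt_sum_real (J : ℕ) :
    ∑ t ∈ Finset.range (J + 1), (-1 : ℝ) ^ t * (J.choose t : ℝ)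
      = if J = 0 then 1 else 0 := by
  have h := Int.alternating_sum_range_choose (n := J)
  have h2 : ((∑ t ∈ Finset.range (J + 1), ((-1) ^ t * J.choose t : ℤ) : ℤ) : ℝ)
      = ((if J = 0 then 1 else 0 : ℤ) : ℝ) := by rw [h]
  push_cast at h2
  rw [h2]

lemma inner_sum (n j r : ℕ) (hr : r ≤ n) :
    ∑ t ∈ Finset.range (j + 1),
      (-1 : ℝ) ^ (j - t) * ((n + j).choose (n + t) : ℝ) * ((n + t).descFactorial n : ℝ)
        * ((j - t).descFactorial (n - r) : ℝ)
    = if n = j + r then (-1 : ℝ) ^ j * ((n + j).factorial : ℝ) else 0 := by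
  rcases lt_or_ge (j + r) n with hlt | hn
  · rw [if_neg (by omega)]
    apply Finset.sum_eq_zero
    intro t ht
    rw [Finset.mem_range] at ht
    have : (j - t).descFactorial (n - r) = 0 :=
      Nat.descFactorial_eq_zero_iff_lt.2 (by omega)
    rw [this]
    simp
  · set J := j + r - n with hJ
    have hJj : J ≤ j := by omega
    have hsub : Finset.range (J + 1) ⊆ Finset.range (j + 1) := by
      apply Finset.range_subset_range.2; omega
    rw [← Finset.sum_subset hsub (by
      intro t ht hnt
      rw [Finset.mem_range] at ht hnt
      have : (j - t).descFactorial (n - r) = 0 :=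
        Nat.descFactorial_eq_zero_iff_lt.2 (by omega)
      rw [this]
      simp)]
    have step : ∀ t ∈ Finset.range (J + 1),
        (-1 : ℝ) ^ (j - t) * ((n + j).choose (n + t) : ℝ) * ((n + t).descFactorial n : ℝ)
          * ((j - t).descFactorial (n - r) : ℝ)
        = ((n + j).factorial : ℝ) / (J.factorial : ℝ)
            * ((-1 : ℝ) ^ j * ((-1 : ℝ) ^ t * (J.choose t : ℝ))) := by
      intro t ht
      rw [Finset.mem_range] at ht
      have hk := key_nat n j r t hr hn (by omega)
      have hkr : ((n + j).choose (n + t) : ℝ) * ((n + t).descFactorial n : ℝ)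
          * ((j - t).descFactorial (n - r) : ℝ) * (J.factorial : ℝ)
          = (J.choose t : ℝ) * ((n + j).factorial : ℝ) := by
        exact_mod_cast congrArg (Nat.cast : ℕ → ℝ) hk
      have ht2 : (-1 : ℝ) ^ t * (-1) ^ t = 1 := by
        rw [← pow_add, ← two_mul, pow_mul]
        norm_num
      have hswap : (-1 : ℝ) ^ (j - t) * (-1) ^ t = (-1) ^ j := by
        rw [← pow_add]
        congr 1
        omega
      have hsgn : (-1 : ℝ) ^ (j - t) = (-1 : ℝ) ^ j * (-1 : ℝ) ^ t := by
        calc (-1 : ℝ) ^ (j - t) = (-1 : ℝ) ^ (j - t) * ((-1) ^ t * (-1) ^ t) := by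
              rw [ht2, mul_one]
          _ = ((-1 : ℝ) ^ (j - t) * (-1) ^ t) * (-1) ^ t := by ring
          _ = (-1 : ℝ) ^ j * (-1 : ℝ) ^ t := by rw [hswap]
      have hJf : (J.factorial : ℝ) ≠ 0 := Nat.cast_ne_zero.2 J.factorial_ne_zero
      have hdiv : ((n + j).choose (n + t) : ℝ) * ((n + t).descFactorial n : ℝ)
          * ((j - t).descFactorial (n - r) : ℝ)
          = ((n + j).factorial : ℝ) / (J.factorial : ℝ) * (J.choose t : ℝ) := by
        rw [div_mul_eq_mul_div, eq_div_iff hJf, hkr]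
        ring
      calc (-1 : ℝ) ^ (j - t) * ((n + j).choose (n + t) : ℝ) * ((n + t).descFactorial n : ℝ)
            * ((j - t).descFactorial (n - r) : ℝ)
          = (-1 : ℝ) ^ (j - t) * (((n + j).choose (n + t) : ℝ) * ((n + t).descFactorial n : ℝ)
              * ((j - t).descFactorial (n - r) : ℝ)) := by ring
        _ = ((-1 : ℝ) ^ j * (-1 : ℝ) ^ t)
              * (((n + j).factorial : ℝ) / (J.factorial : ℝ) * (J.choose t : ℝ)) := by
            rw [hsgn, hdiv]
        _ = ((n + j).factorial : ℝ) / (J.factorial : ℝ)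
              * ((-1 : ℝ) ^ j * ((-1 : ℝ) ^ t * (J.choose t : ℝ))) := by ring
    rw [Finset.sum_congr rfl step, ← Finset.mul_sum, ← Finset.mul_sum, alt_sum_real J]
    rcases eq_or_ne n (j + r) with hc | hc
    · rw [if_pos hc, if_pos (by omega : J = 0)]
      rw [show J = 0 by omega]
      simp [Nat.factorial]
      ring
    · rw [if_neg hc, if_neg (by omega : ¬ J = 0)]
      simp
/-- the Rodrigues kernel -/
noncomputable def HH (N n : ℕ) : ℕ → ℝ := fun k => ff (k : ℝ) n * ff ((k : ℝ) - N) n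

lemma HH_low (N n k : ℕ) (hk : k < n) : HH N n k = 0 := by
  unfold HH
  rw [ff_int_zero ((k : ℕ) : ℝ) n k hk rfl]
  ring

lemma HH_high (N n k : ℕ) (hk1 : N ≤ k) (hk2 : k < N + n) : HH N n k = 0 := by
  unfold HH
  rw [ff_int_zero ((k : ℝ) - N) n (k - N) (by omega) (by
    rw [Nat.cast_sub hk1])]
  ring

lemma MC (N n j : ℕ) :
    (dd)^[n + j] (HH N n) 0
      = if j ≤ n then (-1 : ℝ) ^ (n + j) * (n.choose j : ℝ) * ((n + j).factorial : ℝ)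
          * ff ((N : ℝ) - 1 - (j : ℝ)) (n - j) else 0 := by
  rw [fwdDiff_iter_eq_sum_shift]
  have e1 : ∀ s ∈ Finset.range (n + j + 1),
      ((-1 : ℤ) ^ (n + j - s) * ((n + j).choose s : ℤ)) • HH N n (0 + s • 1)
      = (-1 : ℝ) ^ (n + j - s) * ((n + j).choose s : ℝ) * HH N n s := by
    intro s _
    simp only [smul_eq_mul, mul_one, zero_add, zsmul_eq_mul]
    push_cast
    ring
  rw [Finset.sum_congr rfl e1]
  -- drop the terms with s < n and reindex
  have e2 : ∑ s ∈ Finset.range (n + j + 1),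
        (-1 : ℝ) ^ (n + j - s) * ((n + j).choose s : ℝ) * HH N n s
      = ∑ t ∈ Finset.range (j + 1),
        (-1 : ℝ) ^ (j - t) * ((n + j).choose (n + t) : ℝ) * HH N n (n + t) := by
    rw [Finset.range_eq_Ico,
      ← Finset.sum_Ico_consecutive _ (Nat.zero_le n) (by omega : n ≤ n + j + 1)]
    have h0 : ∑ s ∈ Finset.Ico 0 n,
        (-1 : ℝ) ^ (n + j - s) * ((n + j).choose s : ℝ) * HH N n s = 0 := by
      apply Finset.sum_eq_zero
      intro s hs
      rw [Finset.mem_Ico] at hs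
      rw [HH_low N n s hs.2]
      ring
    rw [h0, zero_add, Finset.sum_Ico_eq_sum_range,
      show n + j + 1 - n = j + 1 by omega]
    apply Finset.sum_congr rfl
    intro t ht
    rw [Finset.mem_range] at ht
    rw [show n + j - (n + t) = j - t by omega]
  rw [e2]
  -- expand H (n + t) via reflection and Vandermonde
  have e3 : ∀ t ∈ Finset.range (j + 1),
      (-1 : ℝ) ^ (j - t) * ((n + j).choose (n + t) : ℝ) * HH N n (n + t)
      = ∑ r ∈ Finset.range (n + 1),
          ((n.choose r : ℝ) * ff ((N : ℝ) - 1 - (j : ℝ)) r * (-1 : ℝ) ^ n)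
          * ((-1 : ℝ) ^ (j - t) * ((n + j).choose (n + t) : ℝ)
              * ((n + t).descFactorial n : ℝ) * ((j - t).descFactorial (n - r) : ℝ)) := by
    intro t ht
    rw [Finset.mem_range] at ht
    unfold HH
    have c1 : ff ((n + t : ℕ) : ℝ) n = ((n + t).descFactorial n : ℝ) := ff_natCast _ _
    have c2 : ff (((n + t : ℕ) : ℝ) - N) n = (-1 : ℝ) ^ n * ff ((N : ℝ) - 1 - (t : ℝ)) n := by
      rw [ff_reflect (((n + t : ℕ) : ℝ) - N) n]
      congr 1
      push_cast
      ring
    have c3 : ff ((N : ℝ) - 1 - (t : ℝ)) n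
        = ∑ r ∈ Finset.range (n + 1),
            (n.choose r : ℝ) * ff ((N : ℝ) - 1 - (j : ℝ)) r * ((j - t).descFactorial (n - r) : ℝ) := by
      have hxy : (N : ℝ) - 1 - (t : ℝ) = ((N : ℝ) - 1 - (j : ℝ)) + (((j - t : ℕ) : ℕ) : ℝ) := by
        rw [Nat.cast_sub (by omega : t ≤ j)]
        ring
      rw [hxy, ff_add]
      apply Finset.sum_congr rfl
      intro r _
      rw [ff_natCast]
    rw [c1, c2, c3]
    simp only [Finset.mul_sum]
    apply Finset.sum_congr rfl
    intro r _
    ring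
  rw [Finset.sum_congr rfl e3, Finset.sum_comm]
  -- inner sums
  have e4 : ∀ r ∈ Finset.range (n + 1),
      ∑ t ∈ Finset.range (j + 1),
        ((n.choose r : ℝ) * ff ((N : ℝ) - 1 - (j : ℝ)) r * (-1 : ℝ) ^ n)
          * ((-1 : ℝ) ^ (j - t) * ((n + j).choose (n + t) : ℝ)
              * ((n + t).descFactorial n : ℝ) * ((j - t).descFactorial (n - r) : ℝ))
      = ((n.choose r : ℝ) * ff ((N : ℝ) - 1 - (j : ℝ)) r * (-1 : ℝ) ^ n)
          * (if n = j + r then (-1 : ℝ) ^ j * ((n + j).factorial : ℝ) else 0) := by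
    intro r hr
    rw [Finset.mem_range] at hr
    rw [← Finset.mul_sum, inner_sum n j r (by omega)]
  rw [Finset.sum_congr rfl e4]
  rcases le_or_gt j n with hj | hj
  · rw [if_pos hj]
    rw [Finset.sum_eq_single (n - j)]
    · rw [if_pos (by omega : n = j + (n - j)), Nat.choose_symm hj]
      ring
    · intro r hr hne
      rw [if_neg (by omega : ¬ n = j + r)]
      ring
    · intro h
      exact absurd (Finset.mem_range.2 (by omega)) h
  · rw [if_neg (by omega : ¬ j ≤ n)]
    apply Finset.sum_eq_zero
    intro r hr
    rw [Finset.mem_range] at hr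
    rw [if_neg (by omega : ¬ n = j + r)]
    ring

/-- dlop coefficients -/
noncomputable def cf (N n i : ℕ) : ℝ :=
  (-1 : ℝ) ^ i * (n.choose i : ℝ) * ((n + i).choose i : ℝ) / ff ((N : ℝ) - 1) i

lemma dlop_eq_sum (N n : ℕ) :
    (fun k => dlop N n k) = ∑ i ∈ Finset.range (n + 1), cf N n i • ee i := by
  funext k
  simp only [dlop, Finset.sum_apply, Pi.smul_apply, smul_eq_mul, cf, ee]
  apply Finset.sum_congr rfl
  intro i _
  ring

lemma dd_iter_dlop_zero (N n m : ℕ) :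
    (dd)^[m] (fun k => dlop N n k) 0
      = if m ≤ n then cf N n m * (m.factorial : ℝ) else 0 := by
  rw [dlop_eq_sum, fwdDiff_iter_finset_sum, Finset.sum_apply]
  have e1 : ∀ i ∈ Finset.range (n + 1),
      (dd)^[m] (cf N n i • ee i) 0 = cf N n i * (if i = m then (m.factorial : ℝ) else 0) := by
    intro i _
    rw [fwdDiff_iter_const_smul]
    simp only [Pi.smul_apply, smul_eq_mul]
    rw [dd_iter_ee_zero]
  rw [Finset.sum_congr rfl e1]
  rcases le_or_gt m n with hm | hm
  · have h0 : ∀ b ∈ Finset.range (n + 1), b ≠ m →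
        cf N n b * (if b = m then (m.factorial : ℝ) else 0) = 0 := by
      intro b _ hb
      rw [if_neg hb, mul_zero]
    have h1 : m ∉ Finset.range (n + 1) →
        cf N n m * (if m = m then (m.factorial : ℝ) else 0) = 0 := by
      intro hnm
      exact absurd (Finset.mem_range.2 (by omega)) hnm
    rw [Finset.sum_eq_single m h0 h1, if_pos rfl, if_pos hm]
  · rw [if_neg (by omega : ¬ m ≤ n)]
    apply Finset.sum_eq_zero
    intro i hi
    rw [Finset.mem_range] at hi
    rw [if_neg (by omega : ¬ i = m), mul_zero]

lemma ff_N1_ne_zero (N n : ℕ) (h : n + 1 ≤ N) (i : ℕ) (hi : i ≤ n) :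
    ff ((N : ℝ) - 1) i ≠ 0 := by
  have hc : (N : ℝ) - 1 = ((N - 1 : ℕ) : ℝ) := by
    rw [Nat.cast_sub (by omega)]
    simp
  rw [hc, ff_natCast]
  exact Nat.cast_ne_zero.2 (by
    intro h0
    have := Nat.descFactorial_eq_zero_iff_lt.1 h0
    omega)

lemma newton_eq (f g : ℕ → ℝ) (h : ∀ m, (dd)^[m] f 0 = (dd)^[m] g 0) : f = g := by
  funext k
  have hf := shift_eq_sum_fwdDiff_iter (1 : ℕ) f k 0
  have hg := shift_eq_sum_fwdDiff_iter (1 : ℕ) g k 0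
  simp only [smul_eq_mul, mul_one, zero_add] at hf hg
  rw [hf, hg]
  exact Finset.sum_congr rfl fun m _ => by rw [h m]

lemma rodrigues (N n : ℕ) (h : n + 1 ≤ N) :
    (dd)^[n] (HH N n)
      = fun k => ((-1 : ℝ) ^ n * (n.factorial : ℝ) * ff ((N : ℝ) - 1) n) * dlop N n k := by
  apply newton_eq
  intro m
  have hL : (dd)^[m] ((dd)^[n] (HH N n)) 0 = (dd)^[n + m] (HH N n) 0 := by
    rw [show n + m = m + n by omega, Function.iterate_add_apply]
  rw [hL, MC]
  have hR : (fun k => ((-1 : ℝ) ^ n * (n.factorial : ℝ) * ff ((N : ℝ) - 1) n) * dlop N n k)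
      = ((-1 : ℝ) ^ n * (n.factorial : ℝ) * ff ((N : ℝ) - 1) n) • (fun k => dlop N n k) := by
    funext k
    simp
  rw [hR, fwdDiff_iter_const_smul]
  simp only [Pi.smul_apply, smul_eq_mul]
  rw [dd_iter_dlop_zero]
  rcases le_or_gt m n with hm | hm
  · rw [if_pos hm, if_pos hm]
    have hsplit := ff_split ((N : ℝ) - 1) m (n - m)
    rw [show m + (n - m) = n by omega] at hsplit
    have hfac : (m.factorial : ℝ) * ((n.choose m : ℝ) * ((n + m).choose m : ℝ))
        * (n.factorial : ℝ) = ((n + m).factorial : ℝ) * (n.choose m : ℝ) := by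
      have hh := Nat.choose_mul_factorial_mul_factorial (show m ≤ n + m by omega)
      rw [show n + m - m = n by omega] at hh
      have : (((n + m).choose m * m.factorial * n.factorial : ℕ) : ℝ)
          = ((n + m).factorial : ℝ) := by exact_mod_cast congrArg (Nat.cast : ℕ → ℝ) hh
      push_cast at this
      nlinarith [this]
    rw [cf, hsplit]
    have hne := ff_N1_ne_zero N n h m hm
    have hinv : ff ((N : ℝ) - 1) m * (ff ((N : ℝ) - 1) m)⁻¹ = 1 := mul_inv_cancel₀ hne
    simp only [div_eq_mul_inv]
    linear_combination (-((-1 : ℝ) ^ n * (-1 : ℝ) ^ m * ff ((N : ℝ) - 1 - (m : ℝ)) (n - m))) * hfac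
      - ((-1 : ℝ) ^ n * (-1 : ℝ) ^ m * ff ((N : ℝ) - 1 - (m : ℝ)) (n - m) * (m.factorial : ℝ)
        * (n.choose m : ℝ) * ((n + m).choose m : ℝ) * (n.factorial : ℝ)) * hinv
  · rw [if_neg (by omega), if_neg (by omega)]
    ring

lemma abel (g p : ℕ → ℝ) (M : ℕ) :
    ∑ k ∈ Finset.range M, (g (k + 1) - g k) * p k
    = g M * p M - g 0 * p 0 - ∑ k ∈ Finset.range M, g (k + 1) * (p (k + 1) - p k) := by
  have tel := Finset.sum_range_sub (fun k => g k * p k) M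
  have e : ∀ k ∈ Finset.range M, (g (k + 1) - g k) * p k
      = (g (k + 1) * p (k + 1) - g k * p k) - g (k + 1) * (p (k + 1) - p k) :=
    fun k _ => by ring
  rw [Finset.sum_congr rfl e, Finset.sum_sub_distrib, tel]

lemma dd_HH_low (N n M y : ℕ) (hy : M + y < n) : (dd)^[M] (HH N n) y = 0 := by
  rw [fwdDiff_iter_eq_sum_shift]
  apply Finset.sum_eq_zero
  intro s hs
  rw [Finset.mem_range] at hs
  simp only [smul_eq_mul, mul_one]
  rw [HH_low N n (y + s) (by omega)]
  simp

lemma dd_HH_high (N n M y : ℕ) (hy1 : N ≤ y) (hy2 : y + M < N + n) :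
    (dd)^[M] (HH N n) y = 0 := by
  rw [fwdDiff_iter_eq_sum_shift]
  apply Finset.sum_eq_zero
  intro s hs
  rw [Finset.mem_range] at hs
  simp only [smul_eq_mul, mul_one]
  rw [HH_high N n (y + s) (by omega) (by omega)]
  simp

lemma by_parts (N n : ℕ) (p : ℕ → ℝ) : ∀ i, i ≤ n →
    ∑ k ∈ Finset.range N, (dd)^[n] (HH N n) k * p k
    = (-1 : ℝ) ^ i * ∑ k ∈ Finset.range N, (dd)^[n - i] (HH N n) (k + i) * (dd)^[i] p k := by
  intro i
  induction i with
  | zero => simp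
  | succ i ih =>
    intro hi
    rw [ih (by omega)]
    have key : ∑ k ∈ Finset.range N, (dd)^[n - i] (HH N n) (k + i) * (dd)^[i] p k
        = - ∑ k ∈ Finset.range N, (dd)^[n - (i + 1)] (HH N n) (k + (i + 1))
            * (dd)^[i + 1] p k := by
      have hg : ∀ k, (dd)^[n - i] (HH N n) (k + i)
          = (fun k => (dd)^[n - (i + 1)] (HH N n) (k + i)) (k + 1)
            - (fun k => (dd)^[n - (i + 1)] (HH N n) (k + i)) k := by
        intro k
        show (dd)^[n - i] (HH N n) (k + i)
          = (dd)^[n - (i + 1)] (HH N n) (k + 1 + i) - (dd)^[n - (i + 1)] (HH N n) (k + i)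
        rw [show k + 1 + i = k + i + 1 by omega, show n - i = (n - (i + 1)) + 1 by omega,
          Function.iterate_succ_apply']
        rfl
      rw [Finset.sum_congr rfl (fun k _ => by rw [hg k]),
        abel (fun k => (dd)^[n - (i + 1)] (HH N n) (k + i)) ((dd)^[i] p) N]
      simp only [zero_add]
      rw [dd_HH_high N n (n - (i + 1)) (N + i) (by omega) (by omega),
        dd_HH_low N n (n - (i + 1)) i (by omega), zero_mul, zero_mul]
      rw [show ∀ S : ℝ, (0:ℝ) - 0 - S = -S from fun S => by ring]
      congr 1
      apply Finset.sum_congr rfl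
      intro k _
      rw [show k + 1 + i = k + (i + 1) by omega]
      congr 1
      rw [Function.iterate_succ_apply']
      rfl
    rw [key]
    ring

lemma dd_iter_dlop_top (N n : ℕ) :
    (dd)^[n] (fun k => dlop N n k) = fun _ => cf N n n * (n.factorial : ℝ) := by
  rw [dlop_eq_sum, fwdDiff_iter_finset_sum]
  funext k
  rw [Finset.sum_apply, Finset.sum_range_succ]
  have e0 : ∀ i ∈ Finset.range n, (dd)^[n] (cf N n i • ee i) k = 0 := by
    intro i hi
    rw [Finset.mem_range] at hi
    rw [fwdDiff_iter_const_smul, Pi.smul_apply, dd_iter_ee, smul_eq_mul]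
    rw [Nat.descFactorial_eq_zero_iff_lt.2 hi]
    simp
  rw [Finset.sum_congr rfl e0, Finset.sum_const_zero, zero_add]
  rw [fwdDiff_iter_const_smul, Pi.smul_apply, dd_iter_ee, smul_eq_mul]
  rw [Nat.descFactorial_self, Nat.sub_self]
  simp only [ee, ff_zero, mul_one]

lemma hockey (a M : ℕ) :
    ∑ i ∈ Finset.range (M + 1), i.choose a = (M + 1).choose (a + 1) := by
  induction M with
  | zero =>
    cases a with
    | zero => simp
    | succ a => simp [Nat.choose_eq_zero_of_lt]
  | succ M ih =>
    rw [Finset.sum_range_succ, ih, Nat.choose_succ_succ (M + 1) a, Nat.add_comm]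

lemma vander_conv (a b : ℕ) : ∀ M : ℕ,
    ∑ i ∈ Finset.range (M + 1), (i.choose a) * ((M - i).choose b)
    = (M + 1).choose (a + b + 1) := by
  induction b with
  | zero => intro M; simp [hockey]
  | succ b ihb =>
    intro M
    induction M with
    | zero => simp [Nat.choose_eq_zero_of_lt (show 1 < a + (b + 1) + 1 by omega)]
    | succ M ihM =>
      rw [Finset.sum_range_succ, Nat.sub_self, Nat.choose_zero_succ, Nat.mul_zero, Nat.add_zero]
      have e : ∀ i ∈ Finset.range (M + 1),
          i.choose a * ((M + 1 - i).choose (b + 1))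
          = i.choose a * ((M - i).choose b) + i.choose a * ((M - i).choose (b + 1)) := by
        intro i hi
        rw [Finset.mem_range] at hi
        rw [show M + 1 - i = (M - i) + 1 by omega, Nat.choose_succ_succ, Nat.mul_add]
      rw [Finset.sum_congr rfl e, Finset.sum_add_distrib, ihb M, ihM]
      rw [show a + (b + 1) + 1 = a + b + 1 + 1 by omega,
        Nat.choose_succ_succ (M + 1) (a + b + 1)]

lemma conv_nat (N n : ℕ) (h : 1 ≤ N) :
    ∑ k ∈ Finset.range N, (k + n).choose n * ((N - 1 - k).choose n)
    = (N + n).choose (2 * n + 1) := by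
  have hv := vander_conv n n (N + n - 1)
  rw [show N + n - 1 + 1 = N + n by omega] at hv
  rw [show N + n = n + N by omega, Finset.sum_range_add] at hv
  have h0 : ∑ i ∈ Finset.range n, i.choose n * ((n + N - 1 - i).choose n) = 0 := by
    apply Finset.sum_eq_zero
    intro i hi
    rw [Finset.mem_range] at hi
    rw [Nat.choose_eq_zero_of_lt hi, Nat.zero_mul]
  rw [h0, zero_add] at hv
  rw [Nat.add_comm N n, show 2 * n + 1 = n + n + 1 by omega, ← hv]
  apply Finset.sum_congr rfl
  intro k hk
  rw [Finset.mem_range] at hk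
  rw [show n + k = k + n by omega, show n + N - 1 - (k + n) = N - 1 - k by omega]

lemma sum_HH (N n : ℕ) (h : n + 1 ≤ N) :
    ∑ k ∈ Finset.range N, HH N n (k + n)
    = (-1 : ℝ) ^ n * (n.factorial : ℝ) * (n.factorial : ℝ)
        * ((N + n).choose (2 * n + 1) : ℝ) := by
  have e : ∀ k ∈ Finset.range N, HH N n (k + n)
      = (-1 : ℝ) ^ n * (((k + n).descFactorial n : ℝ) * ((N - 1 - k).descFactorial n : ℝ)) := by
    intro k hk
    rw [Finset.mem_range] at hk
    unfold HH
    have c1 : ff (((k + n : ℕ)) : ℝ) n = ((k + n).descFactorial n : ℝ) := ff_natCast _ _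
    have c2 : ff ((((k + n : ℕ)) : ℝ) - N) n = (-1 : ℝ) ^ n * ((N - 1 - k).descFactorial n : ℝ) := by
      rw [ff_reflect ((((k + n : ℕ)) : ℝ) - N) n]
      have harg : (n : ℝ) - 1 - ((((k + n : ℕ)) : ℝ) - N) = ((N - 1 - k : ℕ) : ℝ) := by
        rw [Nat.cast_sub (by omega : k ≤ N - 1), Nat.cast_sub (by omega : 1 ≤ N)]
        push_cast
        ring
      rw [harg, ff_natCast]
    rw [c1, c2]
    ring
  rw [Finset.sum_congr rfl e, ← Finset.mul_sum]
  have : ∑ k ∈ Finset.range N,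
      (((k + n).descFactorial n : ℝ) * ((N - 1 - k).descFactorial n : ℝ))
      = ((∑ k ∈ Finset.range N, (k + n).descFactorial n * (N - 1 - k).descFactorial n : ℕ) : ℝ) := by
    push_cast
    rfl
  rw [this]
  have hnat : ∑ k ∈ Finset.range N, (k + n).descFactorial n * (N - 1 - k).descFactorial n
      = n.factorial * n.factorial * ((N + n).choose (2 * n + 1)) := by
    have e2 : ∀ k ∈ Finset.range N,
        (k + n).descFactorial n * (N - 1 - k).descFactorial n
        = n.factorial * n.factorial * ((k + n).choose n * ((N - 1 - k).choose n)) := by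
      intro k _
      rw [Nat.descFactorial_eq_factorial_mul_choose, Nat.descFactorial_eq_factorial_mul_choose]
      ring
    rw [Finset.sum_congr rfl e2, ← Finset.mul_sum, conv_nat N n (by omega)]
  rw [hnat]
  push_cast
  ring

lemma main_eq (N n : ℕ) (h : n + 1 ≤ N) :
    ((-1 : ℝ) ^ n * (n.factorial : ℝ) * ff ((N : ℝ) - 1) n)
      * ∑ k ∈ Finset.range N, (dlop N n k) ^ 2
    = (-1 : ℝ) ^ n * (cf N n n * (n.factorial : ℝ))
        * ((-1 : ℝ) ^ n * (n.factorial : ℝ) * (n.factorial : ℝ)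
            * ((N + n).choose (2 * n + 1) : ℝ)) := by
  have hbp := by_parts N n (fun k => dlop N n k) n le_rfl
  rw [Nat.sub_self] at hbp
  simp only [Function.iterate_zero, id_eq] at hbp
  rw [dd_iter_dlop_top N n, rodrigues N n h] at hbp
  have hL : ∑ k ∈ Finset.range N,
      (fun k => ((-1 : ℝ) ^ n * (n.factorial : ℝ) * ff ((N : ℝ) - 1) n) * dlop N n k) k
        * (fun k => dlop N n k) k
      = ((-1 : ℝ) ^ n * (n.factorial : ℝ) * ff ((N : ℝ) - 1) n)
          * ∑ k ∈ Finset.range N, (dlop N n k) ^ 2 := by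
    rw [Finset.mul_sum]
    apply Finset.sum_congr rfl
    intro k _
    ring
  rw [hL] at hbp
  have hR : ∑ k ∈ Finset.range N, HH N n (k + n) * (fun _ => cf N n n * (n.factorial : ℝ)) k
      = (cf N n n * (n.factorial : ℝ)) * ∑ k ∈ Finset.range N, HH N n (k + n) := by
    rw [Finset.mul_sum]
    apply Finset.sum_congr rfl
    intro k _
    ring
  rw [hR, sum_HH N n h] at hbp
  rw [hbp]
  ring

end FFaux

open FFaux in
theorem stmt_11 (N n : ℕ) (hN : 1 ≤ N) (hn : n ≤ N - 1) :
    ∑ k ∈ Finset.range N, (dlop N n k) ^ 2 =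
      fadingFactorial ((N : ℝ) + n) (n + 1) /
        ((2 * (n : ℝ) + 1) * fadingFactorial ((N : ℝ) - 1) n) := by
  have h : n + 1 ≤ N := by omega
  have key := main_eq N n h
  have hne : fadingFactorial ((N : ℝ) - 1) n ≠ 0 := ff_N1_ne_zero N n h n le_rfl
  have hfac : (n.factorial : ℝ) ≠ 0 := Nat.cast_ne_zero.2 n.factorial_ne_zero
  have hsgn : (-1 : ℝ) ^ n * (-1 : ℝ) ^ n = 1 := by
    rw [← pow_add, ← two_mul, pow_mul]
    norm_num
  -- simplify cf
  have hcf : cf N n n * fadingFactorial ((N : ℝ) - 1) n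
      = (-1 : ℝ) ^ n * (((2 * n).choose n : ℕ) : ℝ) := by
    rw [cf, Nat.choose_self, show n + n = 2 * n by omega]
    field_simp
    simp
  -- factorial facts
  have f1 : (((2 * n).choose n : ℕ) : ℝ) * (n.factorial : ℝ) * (n.factorial : ℝ)
      = (((2 * n).factorial : ℕ) : ℝ) := by
    have hh := Nat.choose_mul_factorial_mul_factorial (show n ≤ 2 * n by omega)
    rw [show 2 * n - n = n by omega] at hh
    exact_mod_cast congrArg (Nat.cast : ℕ → ℝ) hh
  have f2 : fadingFactorial ((N : ℝ) + n) (2 * n + 1)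
      = (((2 * n + 1).factorial : ℕ) : ℝ) * (((N + n).choose (2 * n + 1) : ℕ) : ℝ) := by
    have hc : (N : ℝ) + n = ((N + n : ℕ) : ℝ) := by push_cast; ring
    rw [hc, ff_natCast, Nat.descFactorial_eq_factorial_mul_choose]
    push_cast
    ring
  have f3 : fadingFactorial ((N : ℝ) + n) (2 * n + 1)
      = fadingFactorial ((N : ℝ) + n) (n + 1) * fadingFactorial ((N : ℝ) - 1) n := by
    have hs := ff_split ((N : ℝ) + n) (n + 1) n
    rw [show n + 1 + n = 2 * n + 1 by omega] at hs
    rw [hs]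
    congr 2
    push_cast
    ring
  have f4 : (((2 * n + 1).factorial : ℕ) : ℝ)
      = (2 * (n : ℝ) + 1) * (((2 * n).factorial : ℕ) : ℝ) := by
    rw [Nat.factorial_succ]
    push_cast
    ring
  have h2n1 : (2 * (n : ℝ) + 1) ≠ 0 := by positivity
  -- put it together
  rw [eq_div_iff (by
    apply mul_ne_zero h2n1 hne)]
  -- key : c * E = ...
  have expand : fadingFactorial ((N : ℝ) + n) (n + 1)
      * (fadingFactorial ((N : ℝ) - 1) n * fadingFactorial ((N : ℝ) - 1) n)
      * (2 * (n : ℝ) + 1)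
      = (2 * (n : ℝ) + 1) * (fadingFactorial ((N : ℝ) + n) (2 * n + 1))
          * fadingFactorial ((N : ℝ) - 1) n := by
    rw [f3]
    ring
  -- multiply key by (-1)^n and use hcf
  have key2 : (n.factorial : ℝ) * fadingFactorial ((N : ℝ) - 1) n
      * ∑ k ∈ Finset.range N, (dlop N n k) ^ 2
      = (((2 * n).choose n : ℕ) : ℝ) / fadingFactorial ((N : ℝ) - 1) n
          * ((n.factorial : ℝ) * (n.factorial : ℝ) * (n.factorial : ℝ)
              * ((N + n).choose (2 * n + 1) : ℝ)) := by
    have hcf2 : cf N n n = (-1 : ℝ) ^ n * (((2 * n).choose n : ℕ) : ℝ)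
        / fadingFactorial ((N : ℝ) - 1) n := by
      rw [eq_div_iff hne, hcf]
    calc (n.factorial : ℝ) * fadingFactorial ((N : ℝ) - 1) n
          * ∑ k ∈ Finset.range N, (dlop N n k) ^ 2
        = ((-1 : ℝ) ^ n * (-1 : ℝ) ^ n) * ((n.factorial : ℝ) * fadingFactorial ((N : ℝ) - 1) n
            * ∑ k ∈ Finset.range N, (dlop N n k) ^ 2) := by rw [hsgn]; ring
      _ = (-1 : ℝ) ^ n * (((-1 : ℝ) ^ n * (n.factorial : ℝ) * fadingFactorial ((N : ℝ) - 1) n)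
            * ∑ k ∈ Finset.range N, (dlop N n k) ^ 2) := by ring
      _ = (-1 : ℝ) ^ n * ((-1 : ℝ) ^ n * (cf N n n * (n.factorial : ℝ))
            * ((-1 : ℝ) ^ n * (n.factorial : ℝ) * (n.factorial : ℝ)
                * ((N + n).choose (2 * n + 1) : ℝ))) := by rw [key]
      _ = ((-1 : ℝ) ^ n * (-1 : ℝ) ^ n) * ((-1 : ℝ) ^ n * cf N n n)
            * ((n.factorial : ℝ) * (n.factorial : ℝ) * (n.factorial : ℝ)
                * ((N + n).choose (2 * n + 1) : ℝ)) := by ring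
      _ = ((-1 : ℝ) ^ n * ((-1 : ℝ) ^ n * (((2 * n).choose n : ℕ) : ℝ)
            / fadingFactorial ((N : ℝ) - 1) n))
            * ((n.factorial : ℝ) * (n.factorial : ℝ) * (n.factorial : ℝ)
                * ((N + n).choose (2 * n + 1) : ℝ)) := by rw [hsgn, hcf2]; ring
      _ = (((-1 : ℝ) ^ n * (-1 : ℝ) ^ n) * (((2 * n).choose n : ℕ) : ℝ)
            / fadingFactorial ((N : ℝ) - 1) n)
            * ((n.factorial : ℝ) * (n.factorial : ℝ) * (n.factorial : ℝ)
                * ((N + n).choose (2 * n + 1) : ℝ)) := by ring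
      _ = (((2 * n).choose n : ℕ) : ℝ) / fadingFactorial ((N : ℝ) - 1) n
            * ((n.factorial : ℝ) * (n.factorial : ℝ) * (n.factorial : ℝ)
                * ((N + n).choose (2 * n + 1) : ℝ)) := by rw [hsgn]; ring
  -- now eliminate denominators
  field_simp at key2
  -- final algebra
  have hGF : fadingFactorial ((N : ℝ) + n) (n + 1) * fadingFactorial ((N : ℝ) - 1) n
      = (((2 * n + 1).factorial : ℕ) : ℝ) * (((N + n).choose (2 * n + 1) : ℕ) : ℝ) := by
    rw [← f3, f2]
  apply mul_right_cancel₀ (mul_ne_zero hfac hne)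
  calc (∑ k ∈ Finset.range N, dlop N n k ^ 2)
        * ((2 * (n : ℝ) + 1) * fadingFactorial ((N : ℝ) - 1) n)
        * ((n.factorial : ℝ) * fadingFactorial ((N : ℝ) - 1) n)
      = (2 * (n : ℝ) + 1) * (((n.factorial : ℝ) * fadingFactorial ((N : ℝ) - 1) n
          * ∑ k ∈ Finset.range N, (dlop N n k) ^ 2) * fadingFactorial ((N : ℝ) - 1) n) := by
        ring
    _ = (2 * (n : ℝ) + 1) * ((((2 * n).choose n : ℕ) : ℝ)
          * ((n.factorial : ℝ) * (n.factorial : ℝ) * (n.factorial : ℝ)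
              * (((N + n).choose (2 * n + 1) : ℕ) : ℝ))) := by
          linear_combination (2 * (n : ℝ) + 1) * (n.factorial : ℝ) * key2
    _ = (2 * (n : ℝ) + 1) * ((((2 * n).choose n : ℕ) : ℝ) * (n.factorial : ℝ)
          * (n.factorial : ℝ)) * (((N + n).choose (2 * n + 1) : ℕ) : ℝ)
          * (n.factorial : ℝ) := by ring
    _ = (2 * (n : ℝ) + 1) * (((2 * n).factorial : ℕ) : ℝ)
          * (((N + n).choose (2 * n + 1) : ℕ) : ℝ) * (n.factorial : ℝ) := by rw [f1]
    _ = ((((2 * n + 1).factorial : ℕ) : ℝ) * (((N + n).choose (2 * n + 1) : ℕ) : ℝ))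
          * (n.factorial : ℝ) := by rw [f4]
    _ = (fadingFactorial ((N : ℝ) + n) (n + 1) * fadingFactorial ((N : ℝ) - 1) n)
          * (n.factorial : ℝ) := by rw [hGF]
    _ = fadingFactorial ((N : ℝ) + n) (n + 1)
          * ((n.factorial : ℝ) * fadingFactorial ((N : ℝ) - 1) n) := by ring
end
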